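/- Let h : [0,∞)×[0,∞) → ℝ be C¹ in r and suppose |∂h/∂r(u,r)| ≤ x/(1+r+u)³ for all u,r ≥ 0, where x > 0. Then the radial average h̄(u,r) = (1/r)∫₀ʳ h(u,s) ds satisfies |h(u,r) − h̄(u,r)| ≤ x·r/(2(1+r+u)²(1+u)) for all u ≥ 0 and r > 0. -/

import Mathlib

set_option maxHeartbeats 1000000
noncomputable section
open Real Set MeasureTheory

/-- Radial average `h̄(u,r) = (1/r)∫₀ʳ h(u,s) ds`. -/
def hbar (h : ℝ → ℝ → ℝ) (u r : ℝ) : ℝ := (1 / r) * ∫ s in (0:ℝ)..r, h u s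

lemma aux_inv_sq_deriv (c t : ℝ) (hc : c + t ≠ 0) :
    HasDerivAt (fun s : ℝ => -(1/2) * ((c + s) ^ 2)⁻¹) (((c + t) ^ 3)⁻¹) t := by
  have h1 : HasDerivAt (fun s : ℝ => c + s) 1 t := (hasDerivAt_id t).const_add c
  have h2 := h1.pow 2
  have h3 := (h2.inv (pow_ne_zero 2 hc)).const_mul (-(1/2) : ℝ)
  refine h3.congr_deriv ?_
  simp only [Pi.pow_apply]
  field_simp
  ring

/-- **Bound on the deviation from the radial average.** If `h` is C¹ in `r` with
radial derivative `h'` satisfying `|h'(u,r)| ≤ x/(1+r+u)³` for all `u,r ≥ 0`, then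
`|h(u,r) − h̄(u,r)| ≤ x·r/(2(1+r+u)²(1+u))` for `u ≥ 0`, `r > 0`. -/
theorem deviation_from_average_bound
    (h h' : ℝ → ℝ → ℝ) (x : ℝ) (hx : 0 < x)
    (hdiff : ∀ u : ℝ, 0 ≤ u → ∀ r : ℝ, 0 ≤ r →
      HasDerivAt (fun r' => h u r') (h' u r) r)
    (hbound : ∀ u : ℝ, 0 ≤ u → ∀ r : ℝ, 0 ≤ r → |h' u r| ≤ x / (1 + r + u) ^ 3) :
    ∀ u : ℝ, 0 ≤ u → ∀ r : ℝ, 0 < r →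
      |h u r - hbar h u r| ≤ x * r / (2 * (1 + r + u) ^ 2 * (1 + u)) := by
  intro u hu r hr
  have hu1 : (0:ℝ) < 1 + u := by linarith
  have hru : (0:ℝ) < 1 + r + u := by linarith
  -- continuity of `h u` on `[0, r]`
  have hcont : ContinuousOn (h u) (Icc 0 r) := fun t ht =>
    ((hdiff u hu t ht.1).continuousAt).continuousWithinAt
  -- Step 1: pointwise bound on `|h u r - h u s|`
  have key : ∀ s ∈ Icc (0:ℝ) r, |h u r - h u s| ≤
      x / 2 * (1 / (1 + s + u) ^ 2 - 1 / (1 + r + u) ^ 2) := by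
    intro s hs
    obtain ⟨hs0, hsr⟩ := hs
    -- integrability of `h' u` on `[s, r]`
    have hmeas : AEStronglyMeasurable (h' u) (volume.restrict (Ioc s r)) := by
      have : ∀ t ∈ Ioc s r, deriv (h u) t = h' u t := fun t ht =>
        (hdiff u hu t (le_trans hs0 ht.1.le)).deriv
      refine ((measurable_deriv (h u)).aestronglyMeasurable.restrict).congr ?_
      exact (ae_restrict_iff' measurableSet_Ioc).mpr (ae_of_all _ this)
    have hint : IntervalIntegrable (h' u) volume s r := by
      rw [intervalIntegrable_iff_integrableOn_Ioc_of_le hsr]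
      refine Integrable.mono' (integrable_const x) hmeas ?_
      refine (ae_restrict_iff' measurableSet_Ioc).mpr (ae_of_all _ fun t ht => ?_)
      have ht0 : (0:ℝ) ≤ t := le_trans hs0 ht.1.le
      have h1 : (1:ℝ) ≤ (1 + t + u) ^ 3 := by
        calc (1:ℝ) = 1 ^ 3 := by norm_num
          _ ≤ (1 + t + u) ^ 3 := pow_le_pow_left₀ (by norm_num) (by linarith) 3
      calc ‖h' u t‖ ≤ x / (1 + t + u) ^ 3 := hbound u hu t ht0
        _ ≤ x := by
            rw [div_le_iff₀ (by positivity)]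
            nlinarith [hx.le]
    have hderiv : ∀ t ∈ uIcc s r, HasDerivAt (h u) (h' u t) t := by
      intro t ht
      rw [uIcc_of_le hsr] at ht
      exact hdiff u hu t (le_trans hs0 ht.1)
    have hftc : ∫ t in s..r, h' u t = h u r - h u s :=
      intervalIntegral.integral_eq_sub_of_hasDerivAt hderiv hint
    -- bound the integral
    have hgc : ∀ t ∈ Icc s r, (1 + t + u) ≠ 0 := fun t ht => by
      have := le_trans hs0 ht.1; positivity
    have hgder : ∀ t ∈ uIcc s r,
        HasDerivAt (fun t => x * (-(1/2) * (((1 + u) + t) ^ 2)⁻¹))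
          (x * (((1 + u) + t) ^ 3)⁻¹) t := by
      intro t ht
      rw [uIcc_of_le hsr] at ht
      exact (aux_inv_sq_deriv (1 + u) t (by have := le_trans hs0 ht.1; positivity)).const_mul x
    have hgcont : ContinuousOn (fun t => x * (((1 + u) + t) ^ 3)⁻¹) (uIcc s r) := by
      rw [uIcc_of_le hsr]
      refine ContinuousOn.mul continuousOn_const (ContinuousOn.inv₀ (by fun_prop) ?_)
      intro t ht
      have := le_trans hs0 ht.1
      positivity
    have hgint : IntervalIntegrable (fun t => x * (((1 + u) + t) ^ 3)⁻¹) volume s r :=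
      hgcont.intervalIntegrable
    have hgftc : ∫ t in s..r, x * (((1 + u) + t) ^ 3)⁻¹
        = x * (-(1/2) * (((1 + u) + r) ^ 2)⁻¹) - x * (-(1/2) * (((1 + u) + s) ^ 2)⁻¹) :=
      intervalIntegral.integral_eq_sub_of_hasDerivAt hgder hgint
    have hae : ∀ᵐ t ∂volume.restrict (Set.uIoc s r), ‖h' u t‖ ≤ x * (((1 + u) + t) ^ 3)⁻¹ := by
      rw [uIoc_of_le hsr]
      refine (ae_restrict_iff' measurableSet_Ioc).mpr (ae_of_all _ fun t ht => ?_)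
      have ht0 : (0:ℝ) ≤ t := le_trans hs0 ht.1.le
      calc ‖h' u t‖ ≤ x / (1 + t + u) ^ 3 := hbound u hu t ht0
        _ = x * (((1 + u) + t) ^ 3)⁻¹ := by ring_nf
    have hb := intervalIntegral.norm_integral_le_abs_of_norm_le hae hgint
    rw [Real.norm_eq_abs] at hb
    rw [hftc] at hb
    refine hb.trans ?_
    rw [hgftc]
    have hsu : (0:ℝ) < 1 + s + u := by linarith
    rw [abs_of_nonneg]
    · apply le_of_eq; field_simp; ring
    · have h1 : ((1 + u) + s) ^ 2 ≤ ((1 + u) + r) ^ 2 := by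
        apply pow_le_pow_left₀ (by linarith) (by linarith)
      have h2 : (((1 + u) + r) ^ 2)⁻¹ ≤ (((1 + u) + s) ^ 2)⁻¹ := by
        apply inv_anti₀ (by positivity) h1
      nlinarith
  -- Step 2: rewrite the deviation as an averaged integral
  have hic : IntervalIntegrable (h u) volume 0 r := by
    apply ContinuousOn.intervalIntegrable
    rwa [uIcc_of_le hr.le]
  have hrep : h u r - hbar h u r = (1 / r) * ∫ s in (0:ℝ)..r, (h u r - h u s) := by
    rw [hbar, intervalIntegral.integral_sub (intervalIntegrable_const) hic,
      intervalIntegral.integral_const]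
    field_simp
    ring
  rw [hrep, abs_mul]
  have hF : ContinuousOn (fun s => x / 2 * (1 / (1 + s + u) ^ 2 - 1 / (1 + r + u) ^ 2))
      (uIcc 0 r) := by
    rw [uIcc_of_le hr.le]
    apply ContinuousOn.mul continuousOn_const
    apply ContinuousOn.sub _ continuousOn_const
    refine ContinuousOn.div continuousOn_const (by fun_prop) ?_
    intro t ht
    have := ht.1
    positivity
  have hFint : IntervalIntegrable
      (fun s => x / 2 * (1 / (1 + s + u) ^ 2 - 1 / (1 + r + u) ^ 2)) volume 0 r :=
    hF.intervalIntegrable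
  have hFae : ∀ᵐ s ∂volume.restrict (Set.uIoc (0:ℝ) r), ‖h u r - h u s‖
      ≤ x / 2 * (1 / (1 + s + u) ^ 2 - 1 / (1 + r + u) ^ 2) := by
    rw [uIoc_of_le hr.le]
    refine (ae_restrict_iff' measurableSet_Ioc).mpr (ae_of_all _ fun s hs => ?_)
    exact key s ⟨hs.1.le, hs.2⟩
  have hib := intervalIntegral.norm_integral_le_abs_of_norm_le hFae hFint
  rw [Real.norm_eq_abs] at hib
  -- compute the integral of the bound
  have hGder : ∀ s ∈ uIcc (0:ℝ) r,
      HasDerivAt (fun s => (x/2) * (-(((1 + u) + s))⁻¹) - (x/2) * ((1+r+u)^2)⁻¹ * s)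
        (x / 2 * (1 / (1 + s + u) ^ 2 - 1 / (1 + r + u) ^ 2)) s := by
    intro s hs
    rw [uIcc_of_le hr.le] at hs
    have hsu : ((1:ℝ) + u) + s ≠ 0 := by have := hs.1; positivity
    have h1 : HasDerivAt (fun s : ℝ => (1 + u) + s) 1 s := (hasDerivAt_id s).const_add (1+u)
    have h2 := ((h1.inv hsu).neg).const_mul (x/2 : ℝ)
    have h3 : HasDerivAt (fun s : ℝ => (x/2) * ((1+r+u)^2)⁻¹ * s)
        ((x/2) * ((1+r+u)^2)⁻¹) s := by
      simpa using (hasDerivAt_id s).const_mul ((x/2) * ((1+r+u)^2)⁻¹)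
    have h4 := h2.sub h3
    have hne2 : (1 + r + u : ℝ) ≠ 0 := hru.ne'
    have hsu' : (1 + s + u : ℝ) ≠ 0 := fun hc => hsu (by linarith)
    refine h4.congr_deriv ?_
    rw [show (1 + u + s : ℝ) = 1 + s + u from by ring]
    rw [mul_sub]
    congr 1
    · rw [neg_div, neg_neg]
    · rw [one_div]
  have hGftc : ∫ s in (0:ℝ)..r, x / 2 * (1 / (1 + s + u) ^ 2 - 1 / (1 + r + u) ^ 2)
      = ((x/2) * (-(((1 + u) + r))⁻¹) - (x/2) * ((1+r+u)^2)⁻¹ * r)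
        - ((x/2) * (-(((1 + u) + 0))⁻¹) - (x/2) * ((1+r+u)^2)⁻¹ * 0) :=
    intervalIntegral.integral_eq_sub_of_hasDerivAt hGder hFint
  refine le_trans (mul_le_mul_of_nonneg_left hib (abs_nonneg _)) ?_
  rw [hGftc]
  have hne1 : (1 + u : ℝ) ≠ 0 := hu1.ne'
  have hne2 : (1 + r + u : ℝ) ≠ 0 := hru.ne'
  have hval : ((x/2) * (-(((1 + u) + r))⁻¹) - (x/2) * ((1+r+u)^2)⁻¹ * r)
        - ((x/2) * (-(((1 + u) + 0))⁻¹) - (x/2) * ((1+r+u)^2)⁻¹ * 0)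
      = x * r ^ 2 / (2 * (1 + u) * (1 + r + u) ^ 2) := by
    field_simp
    ring
  rw [hval, abs_of_nonneg (by positivity : (0:ℝ) ≤ 1/r),
    abs_of_nonneg (by positivity : (0:ℝ) ≤ x * r ^ 2 / (2 * (1 + u) * (1 + r + u) ^ 2))]
  apply le_of_eq
  field_simp

end
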